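/- Let n ≥ 2 be an integer, let b be a nonzero algebraic integer, and let w be a periodic point of g_b of period h ≥ 1 whose multiplier μ = ∏_{j=0}^{h-1} (g_b^{∘j}(w))^{n-1} is a primitive m-th root of unity. Set r = h·m and let d be the degree of the minimal polynomial of b over ℤ. Then the constant coefficient of the minimal polynomial of b over ℤ divides (n^r − 1)^d in ℤ; equivalently, Norm(b) divides (n^r − 1)^d. -/

import Mathlib

open Polynomial
set_option synthInstance.maxHeartbeats 400000
set_option maxHeartbeats 1000000

noncomputable abbrev OO : Subalgebra ℤ ℂ := integralClosure ℤ ℂ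

def auxc (n : ℕ) : ℕ → ℕ
  | 0 => 0
  | h+1 => n * auxc n h + 1

noncomputable def auxF (n : ℕ) (b : OO) : ℕ → Polynomial OO
  | 0 => X
  | h+1 => auxF n b h ^ n + C (b * (n : OO) ^ (n * auxc n h))

lemma auxF_aeval (n : ℕ) (hn : 2 ≤ n) (b : ℂ) (hb : IsIntegral ℤ b)
    (g : ℂ → ℂ) (hg : g = fun z : ℂ => (z ^ n + b) / n) (h : ℕ) (z : ℂ) :
    aeval z (auxF n ⟨b, hb⟩ h) = (n : ℂ) ^ (auxc n h) * (g^[h] z) := by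
  induction h with
  | zero => simp [auxF, auxc]
  | succ h ih =>
    have hn0 : (n : ℂ) ≠ 0 := by
      simp only [ne_eq, Nat.cast_eq_zero]; omega
    have hgy : ∀ y : ℂ, (n:ℂ) * g y = y ^ n + b := by
      intro y; rw [hg]; field_simp
    simp only [auxF, auxc, map_add, map_pow, aeval_C, ih, Function.iterate_succ_apply']
    have hcoe : (algebraMap OO ℂ) (⟨b, hb⟩ * (n : OO) ^ (n * auxc n h)) = b * (n:ℂ) ^ (n * auxc n h) := by
      push_cast; rfl
    rw [hcoe, mul_pow, ← pow_mul, pow_succ, mul_comm (auxc n h) n]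
    conv_rhs => rw [mul_assoc, hgy]
    ring

lemma auxF_monic (n : ℕ) (hn : 2 ≤ n) (b : OO) (h : ℕ) :
    (auxF n b h).Monic ∧ (auxF n b h).natDegree = n ^ h := by
  induction h with
  | zero => exact ⟨monic_X, natDegree_X⟩
  | succ h ih =>
    obtain ⟨hm, hdeg⟩ := ih
    have hmp : (auxF n b h ^ n).Monic := hm.pow n
    have hdp : (auxF n b h ^ n).natDegree = n ^ (h+1) := by
      rw [natDegree_pow, hdeg, pow_succ, mul_comm]
    have hlt : (C (b * (n:OO) ^ (n * auxc n h))).degree < (auxF n b h ^ n).degree := by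
      apply lt_of_le_of_lt degree_C_le
      rw [degree_eq_natDegree hmp.ne_zero, hdp]
      exact_mod_cast pow_pos (by omega : 0 < n) (h+1)
    refine ⟨hmp.add_of_left hlt, ?_⟩
    show (auxF n b h ^ n + _).natDegree = _
    rw [natDegree_add_eq_left_of_degree_lt hlt, hdp]

lemma periodic_isIntegral (n : ℕ) (hn : 2 ≤ n) (b : ℂ) (hb : IsIntegral ℤ b)
    (g : ℂ → ℂ) (hg : g = fun z : ℂ => (z ^ n + b) / n)
    (h : ℕ) (hh : 1 ≤ h) (z : ℂ) (hz : g^[h] z = z) : IsIntegral ℤ z := by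
  obtain ⟨hm, hdeg⟩ := auxF_monic n hn ⟨b, hb⟩ h
  set G : Polynomial OO := auxF n ⟨b, hb⟩ h - C ((n:OO) ^ auxc n h) * X with hG
  have h2nh : 1 < n ^ h := by
    calc 1 < n := by omega
    _ = n ^ 1 := (pow_one n).symm
    _ ≤ n ^ h := Nat.pow_le_pow_right (by omega) hh
  have hGm : G.Monic := by
    rw [hG, sub_eq_add_neg]
    apply hm.add_of_left
    rw [degree_neg, degree_eq_natDegree hm.ne_zero, hdeg]
    calc (C ((n:OO) ^ auxc n h) * X).degree ≤ (0 : WithBot ℕ) + 1 :=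
          le_trans (degree_mul_le _ _) (add_le_add degree_C_le degree_X_le)
      _ = ((1 : ℕ) : WithBot ℕ) := by norm_num
      _ < ((n ^ h : ℕ) : WithBot ℕ) := by exact_mod_cast h2nh
  have hGz : aeval z G = 0 := by
    rw [hG, map_sub, map_mul, aeval_C, aeval_X, auxF_aeval n hn b hb g hg h z, hz]
    have : (algebraMap OO ℂ) ((n:OO) ^ auxc n h) = (n:ℂ) ^ auxc n h := by push_cast; rfl
    rw [this, sub_self]
  have hOz : IsIntegral OO z := ⟨G, hGm, by rw [← aeval_def, hGz]⟩
  have hmem : z ∈ integralClosure OO ℂ := hOz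
  rw [integralClosure_idem] at hmem
  obtain ⟨y, hy⟩ := Algebra.mem_bot.mp hmem
  have : IsIntegral ℤ ((y : OO) : ℂ) := y.2
  rwa [show ((y : OO) : ℂ) = z from hy] at this

lemma prod_sub_dvd_aux {R ι : Type*} [CommRing R] (s : Finset ι) (x : ι → R) (b : R) :
    b ∣ (∏ i ∈ s, (x i - b)) - ∏ i ∈ s, x i := by
  induction s using Finset.cons_induction with
  | empty => simp
  | cons a s ha ih =>
    rw [Finset.prod_cons, Finset.prod_cons]
    have : (x a - b) * ∏ i ∈ s, (x i - b) - x a * ∏ i ∈ s, x i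
        = x a * ((∏ i ∈ s, (x i - b)) - ∏ i ∈ s, x i) - b * ∏ i ∈ s, (x i - b) := by
      ring
    rw [this]
    exact dvd_sub (ih.mul_left _) (Dvd.intro _ rfl)

lemma key_dvd (n : ℕ) (hn : 2 ≤ n) (b : ℂ) (hb : IsIntegral ℤ b)
    (g : ℂ → ℂ) (hg : g = fun z : ℂ => (z ^ n + b) / n)
    (w : ℂ) (h : ℕ) (hh : 1 ≤ h) (hper : g^[h] w = w)
    (μ : ℂ) (hμ : μ = ∏ j ∈ Finset.range h, (g^[j] w) ^ (n - 1))
    (m : ℕ) (hm : 1 ≤ m) (hμm : μ ^ m = 1)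
    (r : ℕ) (hr : r = h * m)
    (hint : ∀ j, IsIntegral ℤ (g^[j] w)) :
    (⟨b, hb⟩ : OO) ∣ ((n : OO) ^ r - 1) := by
  have hn0 : (n : ℂ) ≠ 0 := by simp only [ne_eq, Nat.cast_eq_zero]; omega
  set b' : OO := ⟨b, hb⟩ with hb'
  set u : ℕ → OO := fun j => ⟨g^[j] w, hint j⟩ with hu
  set μ' : OO := ∏ j ∈ Finset.range h, u j ^ (n - 1) with hμ'
  have hμcoe : (μ' : ℂ) = μ := by
    rw [hμ', hμ]; push_cast; rfl
  have hμ'm : μ' ^ m = 1 := by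
    apply Subtype.ext; push_cast [hμcoe]; exact hμm
  set P : OO := ∏ j ∈ Finset.range h, u j with hP
  have f1 : ∀ j, u j ^ n = (n : OO) * u (j + 1) - b' := by
    intro j
    apply Subtype.ext
    push_cast
    show (g^[j] w) ^ n = (n : ℂ) * g^[j+1] w - b
    rw [Function.iterate_succ_apply', hg]
    field_simp
    ring
  have hu0 : u h = u 0 := by
    apply Subtype.ext
    show g^[h] w = g^[0] w
    rw [hper, Function.iterate_zero_apply]
  have hshift : ∏ j ∈ Finset.range h, u (j + 1) = P := by
    obtain ⟨h', rfl⟩ : ∃ h', h = h' + 1 := ⟨h - 1, by omega⟩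
    rw [Finset.prod_range_succ, hu0, hP, Finset.prod_range_succ']
  have hmulP : μ' * P = ∏ j ∈ Finset.range h, u j ^ n := by
    rw [hμ', hP, ← Finset.prod_mul_distrib]
    apply Finset.prod_congr rfl
    intro j _
    rw [← pow_succ]
    congr 1
    omega
  have key : b' ∣ (μ' - (n : OO) ^ h) * P := by
    have e1 : μ' * P = ∏ j ∈ Finset.range h, ((n : OO) * u (j + 1) - b') := by
      rw [hmulP]
      exact Finset.prod_congr rfl fun j _ => f1 j
    have e2 : (n : OO) ^ h * P = ∏ j ∈ Finset.range h, (n : OO) * u (j + 1) := by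
      rw [Finset.prod_mul_distrib, Finset.prod_const, Finset.card_range, hshift]
    have := prod_sub_dvd_aux (Finset.range h) (fun j => (n : OO) * u (j + 1)) b'
    rw [← e1, ← e2, ← sub_mul] at this
    exact this
  set Q : OO := (∏ j ∈ Finset.range h, u j ^ (n - 2)) * μ' ^ (m - 1) with hQ
  have hPQ : P * Q = 1 := by
    have h1 : P * (∏ j ∈ Finset.range h, u j ^ (n - 2)) = μ' := by
      rw [hP, ← Finset.prod_mul_distrib, hμ']
      apply Finset.prod_congr rfl
      intro j _
      rw [← pow_succ']
      congr 1
      omega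
    calc P * Q = P * (∏ j ∈ Finset.range h, u j ^ (n - 2)) * μ' ^ (m - 1) := by
          rw [hQ, mul_assoc]
      _ = μ' * μ' ^ (m - 1) := by rw [h1]
      _ = μ' ^ m := by rw [← pow_succ']; congr 1; omega
      _ = 1 := hμ'm
  have h2 : (μ' - (n : OO) ^ h) * P ∣ (μ' ^ m - ((n : OO) ^ h) ^ m) * P ^ m :=
    mul_dvd_mul (sub_dvd_pow_sub_pow _ _ m) (dvd_pow_self P (by omega))
  have h3 := key.trans h2
  rw [hμ'm, ← pow_mul, ← hr] at h3
  have h4 : b' ∣ (1 - (n : OO) ^ r) * P ^ m * Q ^ m := h3.mul_right _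
  rw [mul_assoc, ← mul_pow, hPQ, one_pow, mul_one] at h4
  have h5 := h4.neg_right
  rwa [neg_sub] at h5

lemma aux_aeval_sum (q : Polynomial ℤ) (k : ℕ) (hk : q.natDegree < k + 1)
    (N : ℤ) (x y : ℂ) (hbc : (N : ℂ) = x * y) :
    aeval y (∑ i ∈ Finset.range (k + 1), C (q.coeff i * N ^ i) * X ^ (k - i))
      = y ^ k * aeval x q := by
  rw [aeval_eq_sum_range' hk, map_sum, Finset.mul_sum]
  apply Finset.sum_congr rfl
  intro i hi
  have hik : i ≤ k := by
    have := Finset.mem_range.mp hi; omega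
  rw [map_mul, map_pow, aeval_C, aeval_X, zsmul_eq_mul, eq_intCast,
    Int.cast_mul, Int.cast_pow, hbc, mul_pow]
  have : y ^ i * y ^ (k - i) = y ^ k := by
    rw [← pow_add]; congr 1; omega
  calc (q.coeff i : ℂ) * (x ^ i * y ^ i) * y ^ (k - i)
      = (q.coeff i : ℂ) * x ^ i * (y ^ i * y ^ (k - i)) := by ring
    _ = y ^ k * ((q.coeff i : ℂ) * x ^ i) := by rw [this]; ring

lemma aux_coeff_zero_sum (q : Polynomial ℤ) (k : ℕ) (hq : q.coeff k = 1) (N : ℤ) :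
    (∑ i ∈ Finset.range (k + 1), C (q.coeff i * N ^ i) * X ^ (k - i)).coeff 0 = N ^ k := by
  rw [finset_sum_coeff]
  rw [Finset.sum_eq_single k]
  · rw [coeff_C_mul, coeff_X_pow, Nat.sub_self, if_pos rfl, mul_one, hq, one_mul]
  · intro i hi hne
    have h1 : i < k + 1 := Finset.mem_range.mp hi
    have h2 : k - i ≠ 0 := by omega
    rw [coeff_C_mul, coeff_X_pow, if_neg (by omega), mul_zero]
  · intro hk
    exact absurd (Finset.self_mem_range_succ k) hk

lemma aux_natDegree_sum (q : Polynomial ℤ) (k : ℕ) (N : ℤ) :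
    (∑ i ∈ Finset.range (k + 1), C (q.coeff i * N ^ i) * X ^ (k - i)).natDegree ≤ k := by
  apply natDegree_sum_le_of_forall_le
  intro i _
  apply le_trans (natDegree_mul_le)
  rw [natDegree_C, natDegree_X_pow]
  omega

lemma final_step (b c : ℂ) (hb : IsIntegral ℤ b) (hc : IsIntegral ℤ c)
    (N : ℤ) (hN : N ≠ 0) (hbc : (N : ℂ) = b * c)
    (d : ℕ) (hd : d = (minpoly ℤ b).natDegree) :
    (minpoly ℤ b).coeff 0 ∣ N ^ d := by
  set p := minpoly ℤ b with hp
  set π := minpoly ℤ c with hπ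
  set e := π.natDegree with he
  have hpm : p.Monic := minpoly.monic hb
  have hπm : π.Monic := minpoly.monic hc
  set R₁ : Polynomial ℤ := ∑ i ∈ Finset.range (d + 1), C (p.coeff i * N ^ i) * X ^ (d - i) with hR₁
  have hRc : aeval c R₁ = 0 := by
    rw [hR₁, aux_aeval_sum p d (by omega) N b c hbc, minpoly.aeval, mul_zero]
  have hπR : π ∣ R₁ := minpoly.isIntegrallyClosed_dvd hc hRc
  have hR0 : R₁.coeff 0 = N ^ d := by
    rw [hR₁]
    exact aux_coeff_zero_sum p d (by rw [hd]; exact hpm.coeff_natDegree) N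
  have hRne : R₁ ≠ 0 := by
    intro h0
    apply pow_ne_zero d hN
    rw [← hR0, h0, coeff_zero]
  have hed : e ≤ d := le_trans (natDegree_le_of_dvd hπR hRne) (aux_natDegree_sum p d N)
  set Q₁ : Polynomial ℤ := ∑ i ∈ Finset.range (e + 1), C (π.coeff i * N ^ i) * X ^ (e - i) with hQ₁
  have hQb : aeval b Q₁ = 0 := by
    rw [hQ₁, aux_aeval_sum π e (by omega) N c b (by rw [hbc]; ring), minpoly.aeval, mul_zero]
  have hpQ : p ∣ Q₁ := minpoly.isIntegrallyClosed_dvd hb hQb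
  have hQ0 : Q₁.coeff 0 = N ^ e := by
    rw [hQ₁]
    exact aux_coeff_zero_sum π e hπm.coeff_natDegree N
  obtain ⟨s, hs⟩ := hpQ
  have h1 : p.coeff 0 ∣ N ^ e := ⟨s.coeff 0, by rw [← hQ0, hs, mul_coeff_zero]⟩
  exact h1.trans (pow_dvd_pow N hed)

theorem stmt9 (n : ℕ) (hn : 2 ≤ n) (b : ℂ) (hb0 : b ≠ 0) (hb : IsIntegral ℤ b)
    (g : ℂ → ℂ) (hg : g = fun z : ℂ => (z ^ n + b) / n)
    (w : ℂ) (h : ℕ) (hh : 1 ≤ h) (hper : g^[h] w = w)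
    (μ : ℂ) (hμ : μ = ∏ j ∈ Finset.range h, (g^[j] w) ^ (n - 1))
    (m : ℕ) (hm : 1 ≤ m) (hprim : IsPrimitiveRoot μ m)
    (r : ℕ) (hr : r = h * m)
    (d : ℕ) (hd : d = (minpoly ℤ b).natDegree) :
    (minpoly ℤ b).coeff 0 ∣ ((n : ℤ) ^ r - 1) ^ d := by
  have hint : ∀ j, IsIntegral ℤ (g^[j] w) := by
    intro j
    apply periodic_isIntegral n hn b hb g hg h hh
    rw [← Function.iterate_add_apply, Nat.add_comm, Function.iterate_add_apply, hper]
  have hdvd : (⟨b, hb⟩ : OO) ∣ ((n : OO) ^ r - 1) :=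
    key_dvd n hn b hb g hg w h hh hper μ hμ m hm hprim.pow_eq_one r hr hint
  obtain ⟨c', hc'⟩ := hdvd
  set N : ℤ := (n : ℤ) ^ r - 1 with hN
  have hrpos : 1 ≤ r := by
    rw [hr]; exact Nat.one_le_iff_ne_zero.mpr (by positivity)
  have hNne : N ≠ 0 := by
    have : (2 : ℤ) ≤ (n : ℤ) ^ r := by
      calc (2 : ℤ) ≤ (n : ℤ) := by exact_mod_cast hn
        _ = (n : ℤ) ^ 1 := (pow_one _).symm
        _ ≤ (n : ℤ) ^ r := pow_le_pow_right₀ (by exact_mod_cast (by omega : 1 ≤ n)) hrpos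
    omega
  have hbc : (N : ℂ) = b * (c' : ℂ) := by
    have := congrArg (fun x : OO => (x : ℂ)) hc'
    push_cast at this
    rw [hN]
    push_cast
    exact this
  have := final_step b (c' : ℂ) hb c'.2 N hNne hbc d hd
  rwa [hN] at this
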